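/- Let φ ∈ K(z) be a rational function of degree d ≥ 2. Then for all n ≥ 1, the height of the n-th iterate satisfies h(φⁿ) ≤ ((dⁿ−1)/(d−1))·h(φ) + d²·((d^{n−1}−1)/(d−1))·log 8. -/

import Mathlib

open Polynomial Filter

noncomputable section

attribute [local instance] Classical.propDecidable

/-- A set of nonarchimedean places on a field `K`, satisfying the product formula;
this is the structure carried by the function field of a smooth projective curve
over an algebraically closed field of characteristic `0`. -/
structure PlaceData (K : Type*) [Field K] where
  Place : Type
  absv : Place → AbsoluteValue K ℝ
  nonarch : ∀ (v : Place) (x y : K), absv v (x + y) ≤ max (absv v x) (absv v y)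
  finite_support : ∀ x : K, x ≠ 0 → {v : Place | absv v x ≠ 1}.Finite
  product_formula : ∀ x : K, x ≠ 0 → (∑ᶠ v : Place, Real.log (absv v x)) = 0

variable {K : Type*} [Field K]

/-- The (absolute logarithmic) height of an element of `K`. -/
def PlaceData.ht (M : PlaceData K) (x : K) : ℝ :=
  ∑ᶠ v : M.Place, Real.log (max (M.absv v x) 1)

/-- Points of `ℙ¹(K) = K ∪ {∞}` are modelled by `Option K`: `some x = [x:1]`, `none = ∞`. -/
def PlaceData.htP1 (M : PlaceData K) : Option K → ℝ
  | Option.some x => M.ht x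
  | Option.none => 0

/-- `max` of `av` over the coefficients of a polynomial. -/
def polyAbs (av : AbsoluteValue K ℝ) (p : K[X]) : ℝ :=
  (Finset.range (p.natDegree + 1)).sup' ⟨0, Finset.mem_range.mpr (Nat.succ_pos _)⟩ fun i => av (p.coeff i)

/-- The height of a rational function `φ = f/g` with `f, g` coprime. -/
def PlaceData.htRF (M : PlaceData K) (φ : RatFunc K) : ℝ :=
  ∑ᶠ v : M.Place, Real.log (max (polyAbs (M.absv v) φ.num) (polyAbs (M.absv v) φ.denom))

/-- The degree of a rational function. -/
def degRF (φ : RatFunc K) : ℕ := max φ.num.natDegree φ.denom.natDegree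

/-- Evaluation of a rational map `φ` on `ℙ¹(K) = K ∪ {∞}`. -/
def evalP1 (φ : RatFunc K) : Option K → Option K
  | Option.some a =>
      if φ.denom.eval a = 0 then Option.none
      else Option.some (φ.num.eval a / φ.denom.eval a)
  | Option.none =>
      if φ.denom.natDegree < φ.num.natDegree then Option.none
      else Option.some (φ.num.coeff φ.denom.natDegree / φ.denom.leadingCoeff)

/-- Composition of rational functions. -/
def RFcomp (φ ψ : RatFunc K) : RatFunc K :=
  φ.num.eval₂ (algebraMap K (RatFunc K)) ψ / φ.denom.eval₂ (algebraMap K (RatFunc K)) ψ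

/-- The `n`-fold iterate `φⁿ = φ ∘ ⋯ ∘ φ` as a rational function. -/
def RFiter (φ : RatFunc K) : ℕ → RatFunc K
  | 0 => RatFunc.X
  | n + 1 => RFcomp φ (RFiter φ n)

/-- The canonical height `ĥ_φ(P) = lim_n h(φⁿ(P))/dⁿ`. -/
def canHt (M : PlaceData K) (φ : RatFunc K) (P : Option K) : ℝ :=
  limUnder atTop fun n : ℕ => M.htP1 ((evalP1 φ)^[n] P) / (degRF φ : ℝ) ^ n

/-- `P ∈ ℙ¹(K)` is preperiodic for `φ` if its forward orbit is finite. -/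
def P1Preperiodic (φ : RatFunc K) (P : Option K) : Prop :=
  (Set.range fun n : ℕ => (evalP1 φ)^[n] P).Finite

/-- Base change of a rational function along a field embedding. -/
def mapRF {L : Type*} [Field L] (f : K →+* L) (φ : RatFunc K) : RatFunc L :=
  algebraMap L[X] (RatFunc L) (φ.num.map f) / algebraMap L[X] (RatFunc L) (φ.denom.map f)

/-- Base change of a point of `ℙ¹`. -/
def mapP1 {L : Type*} [Field L] (f : K →+* L) : Option K → Option L :=
  Option.map fun x => f x

/-- `φ ∈ K(z)` is isotrivial if some Möbius conjugate `M⁻¹ ∘ φ ∘ M`, with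
`M ∈ PGL₂(K̄)`, has all coefficients in the field of constants `k`. -/
def IsIsotrivial (k : Type*) [Field k] [Algebra k K] (φ : RatFunc K) : Prop :=
  ∃ a b c d : AlgebraicClosure K, a * d - b * c ≠ 0 ∧
    ∃ ψ : RatFunc (AlgebraicClosure K),
      ψ = RFcomp
            ((RatFunc.C d * RatFunc.X - RatFunc.C b) /
              (-(RatFunc.C c) * RatFunc.X + RatFunc.C a))
            (RFcomp (mapRF (algebraMap K (AlgebraicClosure K)) φ)
              ((RatFunc.C a * RatFunc.X + RatFunc.C b) /
                (RatFunc.C c * RatFunc.X + RatFunc.C d))) ∧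
      (∀ i, ψ.num.coeff i ∈
        Set.range ((algebraMap K (AlgebraicClosure K)).comp (algebraMap k K))) ∧
      (∀ i, ψ.denom.coeff i ∈
        Set.range ((algebraMap K (AlgebraicClosure K)).comp (algebraMap k K)))

/-- `Q ∈ ℙ¹(K)` is exceptional for `φ` if its total backward orbit in `ℙ¹(K̄)` is finite. -/
def IsExceptional (φ : RatFunc K) (Q : Option K) : Prop :=
  {P : Option (AlgebraicClosure K) | ∃ m : ℕ, 1 ≤ m ∧
    (evalP1 (mapRF (algebraMap K (AlgebraicClosure K)) φ))^[m] P
      = mapP1 (algebraMap K (AlgebraicClosure K)) Q}.Finite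

/-- The chordal metric `ρ_v` on `ℙ¹`, relative to an absolute value. -/
def chordalDist (av : AbsoluteValue K ℝ) : Option K → Option K → ℝ
  | Option.some x, Option.some y => av (x - y) / (max (av x) 1 * max (av y) 1)
  | Option.some x, Option.none => 1 / max (av x) 1
  | Option.none, Option.some y => 1 / max (av y) 1
  | Option.none, Option.none => 0

/-- The logarithmic chordal metric `λ_v = - log ρ_v`. -/
def lamv (av : AbsoluteValue K ℝ) (P Q : Option K) : ℝ := - Real.log (chordalDist av P Q)

/-- The ring of `S`-integers `R_S = {x ∈ K : |x|_v ≤ 1 for all v ∉ S}`. -/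
def SInt (M : PlaceData K) (S : Finset M.Place) : Set K :=
  {x : K | ∀ v : M.Place, v ∉ S → M.absv v x ≤ 1}

/-- The group of `S`-units `R_S^* = {x ∈ K : x ≠ 0, |x|_v = 1 for all v ∉ S}`. -/
def SUnit (M : PlaceData K) (S : Finset M.Place) : Set K :=
  {x : K | x ≠ 0 ∧ ∀ v : M.Place, v ∉ S → M.absv v x = 1}

/-- Ramification index of `f` at a finite point `a` with `f(a)` finite,
`e_a(f) = ord_a (f(z) - f(a))`; if `f(a) = ∞` it is the order of the pole. -/
def ramIndexFin (f : RatFunc K) (a : K) : ℕ :=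
  if f.denom.eval a = 0 then f.denom.rootMultiplicity a
  else ((f - RatFunc.C (f.num.eval a / f.denom.eval a)).num).rootMultiplicity a

/-- Ramification index `e_P(f)` of `f` at `P ∈ ℙ¹(K)`; the point `∞` is handled by
conjugating with the Möbius transformation `z ↦ 1/z`. -/
def ramIndex (f : RatFunc K) : Option K → ℕ
  | Option.some a => ramIndexFin f a
  | Option.none => ramIndexFin (RFcomp f (1 / RatFunc.X)) 0

/-- `log_d⁺ t = max (log t / log d) 0`. -/
def logdPlus (d : ℕ) (t : ℝ) : ℝ := max (Real.log t / Real.log d) 0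

/-- `inf {ĥ_φ(Q) : Q ∈ ℙ¹(K), ĥ_φ(Q) > 0}`. -/
def infposCanHt (M : PlaceData K) (φ : RatFunc K) : ℝ :=
  sInf {t : ℝ | 0 < t ∧ ∃ Q : Option K, canHt M φ Q = t}

/-- `K` is an (algebraic) function field in one variable over `k`. -/
def IsFunctionFieldOver (k K : Type*) [Field k] [Field K] [Algebra k K] : Prop :=
  ∃ t : K, Transcendental k t ∧
    FiniteDimensional (IntermediateField.adjoin k ({t} : Set K)) K

/-! ### Auxiliary machinery for stmt_1 -/

section StmtOneAux

theorem SH_polyAbs_nonneg (av : AbsoluteValue K ℝ) (p : K[X]) : 0 ≤ polyAbs av p := by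
  refine le_trans ?_ (Finset.le_sup' (fun i => av (p.coeff i)) (Finset.self_mem_range_succ _))
  exact av.nonneg _

theorem SH_coeff_le_polyAbs (av : AbsoluteValue K ℝ) (p : K[X]) (i : ℕ) :
    av (p.coeff i) ≤ polyAbs av p := by
  rcases le_or_gt i p.natDegree with h | h
  · exact Finset.le_sup' (fun i => av (p.coeff i)) (Finset.mem_range_succ_iff.2 h)
  · rw [p.coeff_eq_zero_of_natDegree_lt h, map_zero]; exact SH_polyAbs_nonneg av p

theorem SH_polyAbs_pos (av : AbsoluteValue K ℝ) {p : K[X]} (hp : p ≠ 0) : 0 < polyAbs av p :=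
  lt_of_lt_of_le (av.pos (mt leadingCoeff_eq_zero.mp hp)) (SH_coeff_le_polyAbs av p p.natDegree)

theorem SH_polyAbs_le (av : AbsoluteValue K ℝ) (p : K[X]) {B : ℝ}
    (h : ∀ i, av (p.coeff i) ≤ B) : polyAbs av p ≤ B :=
  Finset.sup'_le _ _ fun i _ => h i

theorem SH_av_sum_le (av : AbsoluteValue K ℝ)
    (hna : ∀ x y : K, av (x + y) ≤ max (av x) (av y))
    {ι : Type*} (s : Finset ι) (f : ι → K) {B : ℝ} (hB : 0 ≤ B)
    (h : ∀ i ∈ s, av (f i) ≤ B) : av (∑ i ∈ s, f i) ≤ B := by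
  classical
  induction s using Finset.induction_on with
  | empty => simpa using hB
  | @insert a s' hx ih =>
      rw [Finset.sum_insert hx]
      exact le_trans (hna _ _) (max_le (h a (Finset.mem_insert_self _ _))
        (ih fun i hi => h i (Finset.mem_insert_of_mem hi)))

theorem SH_av_sum_lt (av : AbsoluteValue K ℝ)
    (hna : ∀ x y : K, av (x + y) ≤ max (av x) (av y))
    {ι : Type*} (s : Finset ι) (f : ι → K) {B : ℝ} (hB : 0 < B)
    (h : ∀ i ∈ s, av (f i) < B) : av (∑ i ∈ s, f i) < B := by
  classical
  induction s using Finset.induction_on with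
  | empty => simpa using hB
  | @insert a s' hx ih =>
      rw [Finset.sum_insert hx]
      exact lt_of_le_of_lt (hna _ _) (max_lt (h a (Finset.mem_insert_self _ _))
        (ih fun i hi => h i (Finset.mem_insert_of_mem hi)))

theorem SH_exists_dominant (av : AbsoluteValue K ℝ) (p : K[X]) (hp : p ≠ 0) :
    ∃ i₀, av (p.coeff i₀) = polyAbs av p ∧ ∀ i, i₀ < i → av (p.coeff i) < polyAbs av p := by
  classical
  set S := (Finset.range (p.natDegree + 1)).filter
    (fun i => av (p.coeff i) = polyAbs av p) with hS
  have hSne : S.Nonempty := by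
    obtain ⟨i₀, hmem, hi₀⟩ := Finset.exists_mem_eq_sup' (Finset.nonempty_range_add_one
      (n := p.natDegree)) fun i => av (p.coeff i)
    exact ⟨i₀, Finset.mem_filter.2 ⟨hmem, hi₀.symm⟩⟩
  refine ⟨S.max' hSne, (Finset.mem_filter.1 (S.max'_mem hSne)).2, fun i hi => ?_⟩
  rcases le_or_gt i p.natDegree with h | h
  · refine lt_of_le_of_ne (SH_coeff_le_polyAbs av p i) fun heq => ?_
    exact absurd (Finset.le_max' S i (Finset.mem_filter.2
      ⟨Finset.mem_range_succ_iff.2 h, heq⟩)) (not_le.2 hi)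
  · rw [p.coeff_eq_zero_of_natDegree_lt h, map_zero]; exact SH_polyAbs_pos av hp

theorem SH_polyAbs_mul (av : AbsoluteValue K ℝ)
    (hna : ∀ x y : K, av (x + y) ≤ max (av x) (av y)) (p q : K[X]) :
    polyAbs av (p * q) = polyAbs av p * polyAbs av q := by
  classical
  have h0 : polyAbs av (0 : K[X]) = 0 := by simp [polyAbs]
  rcases eq_or_ne p 0 with rfl | hp
  · rw [zero_mul, h0, zero_mul]
  rcases eq_or_ne q 0 with rfl | hq
  · rw [mul_zero, h0, mul_zero]
  have hP := SH_polyAbs_pos av hp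
  have hQ := SH_polyAbs_pos av hq
  apply le_antisymm
  · refine SH_polyAbs_le av _ fun k => ?_
    rw [coeff_mul]
    refine SH_av_sum_le av hna _ _ (by positivity) fun x _ => ?_
    rw [map_mul]
    exact mul_le_mul (SH_coeff_le_polyAbs av p x.1) (SH_coeff_le_polyAbs av q x.2)
      (av.nonneg _) (SH_polyAbs_nonneg av p)
  · obtain ⟨i₀, hi₀e, hi₀⟩ := SH_exists_dominant av p hp
    obtain ⟨j₀, hj₀e, hj₀⟩ := SH_exists_dominant av q hq
    have hmem : (i₀, j₀) ∈ Finset.HasAntidiagonal.antidiagonal (i₀ + j₀) := by simp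
    have hsplit : (p * q).coeff (i₀ + j₀) = p.coeff i₀ * q.coeff j₀ +
        ∑ x ∈ (Finset.HasAntidiagonal.antidiagonal (i₀ + j₀)).erase (i₀, j₀), p.coeff x.1 * q.coeff x.2 := by
      rw [coeff_mul]
      exact (Finset.add_sum_erase _ (fun x => p.coeff x.1 * q.coeff x.2) hmem).symm
    have hrest : av (∑ x ∈ (Finset.HasAntidiagonal.antidiagonal (i₀ + j₀)).erase (i₀, j₀),
        p.coeff x.1 * q.coeff x.2) < polyAbs av p * polyAbs av q := by
      refine SH_av_sum_lt av hna _ _ (by positivity) fun x hx => ?_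
      obtain ⟨hne, hx⟩ := Finset.mem_erase.1 hx
      rw [Finset.HasAntidiagonal.mem_antidiagonal] at hx
      rw [map_mul]
      rcases lt_trichotomy x.1 i₀ with h1 | h1 | h1
      · have h2 : j₀ < x.2 := by omega
        calc av (p.coeff x.1) * av (q.coeff x.2)
            ≤ polyAbs av p * av (q.coeff x.2) :=
              mul_le_mul_of_nonneg_right (SH_coeff_le_polyAbs av p x.1) (av.nonneg _)
          _ < polyAbs av p * polyAbs av q := mul_lt_mul_of_pos_left (hj₀ _ h2) hP
      · exact absurd (Prod.ext h1 (by omega)) hne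
      · calc av (p.coeff x.1) * av (q.coeff x.2)
            ≤ av (p.coeff x.1) * polyAbs av q :=
              mul_le_mul_of_nonneg_left (SH_coeff_le_polyAbs av q x.2) (av.nonneg _)
          _ < polyAbs av p * polyAbs av q := mul_lt_mul_of_pos_right (hi₀ _ h1) hQ
    have hmain : av (p.coeff i₀ * q.coeff j₀) = polyAbs av p * polyAbs av q := by
      rw [map_mul, hi₀e, hj₀e]
    have hge : polyAbs av p * polyAbs av q ≤ av ((p * q).coeff (i₀ + j₀)) := by
      by_contra hlt
      push_neg at hlt
      have : av (p.coeff i₀ * q.coeff j₀) ≤ max (av ((p*q).coeff (i₀+j₀)))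
          (av (-(∑ x ∈ (Finset.HasAntidiagonal.antidiagonal (i₀ + j₀)).erase (i₀, j₀),
            p.coeff x.1 * q.coeff x.2))) := by
        rw [show p.coeff i₀ * q.coeff j₀ = (p*q).coeff (i₀+j₀) +
          (-(∑ x ∈ (Finset.HasAntidiagonal.antidiagonal (i₀ + j₀)).erase (i₀, j₀),
            p.coeff x.1 * q.coeff x.2)) by rw [hsplit]; ring]
        exact hna _ _
      rw [av.map_neg, hmain] at this
      exact absurd this (not_le.2 (max_lt hlt hrest))
    exact le_trans hge (SH_coeff_le_polyAbs av _ _)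

theorem SH_polyAbs_C (av : AbsoluteValue K ℝ) (a : K) : polyAbs av (C a) = av a := by
  simp [polyAbs]

theorem SH_polyAbs_one (av : AbsoluteValue K ℝ) : polyAbs av (1 : K[X]) = 1 := by
  simpa using SH_polyAbs_C av 1

theorem SH_polyAbs_pow (av : AbsoluteValue K ℝ)
    (hna : ∀ x y : K, av (x + y) ≤ max (av x) (av y)) (p : K[X]) (n : ℕ) :
    polyAbs av (p ^ n) = polyAbs av p ^ n := by
  induction n with
  | zero => simpa using SH_polyAbs_one av
  | succ n ih => rw [pow_succ, pow_succ, SH_polyAbs_mul av hna, ih]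

theorem SH_polyAbs_X (av : AbsoluteValue K ℝ) : polyAbs av (X : K[X]) = 1 := by
  apply le_antisymm
  · refine SH_polyAbs_le av _ fun i => ?_
    rcases eq_or_ne i 1 with rfl | h
    · simp
    · simp [Polynomial.coeff_X, Ne.symm h]
  · have := SH_coeff_le_polyAbs av (X : K[X]) 1
    simpa using this

theorem SH_polyAbs_sum_le (av : AbsoluteValue K ℝ)
    (hna : ∀ x y : K, av (x + y) ≤ max (av x) (av y))
    {ι : Type*} (s : Finset ι) (F : ι → K[X]) {B : ℝ} (hB : 0 ≤ B)
    (h : ∀ i ∈ s, polyAbs av (F i) ≤ B) : polyAbs av (∑ i ∈ s, F i) ≤ B := by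
  refine SH_polyAbs_le av _ fun j => ?_
  rw [Polynomial.finset_sum_coeff]
  exact SH_av_sum_le av hna _ _ hB fun i hi =>
    le_trans (SH_coeff_le_polyAbs av (F i) j) (h i hi)

/-! ### finsum tools -/

theorem SH_finsum_mono {ι : Type} {f g : ι → ℝ} (hf : (Function.support f).Finite)
    (hg : (Function.support g).Finite) (h : ∀ i, f i ≤ g i) : ∑ᶠ i, f i ≤ ∑ᶠ i, g i := by
  classical
  set T : Finset ι := hf.toFinset ∪ hg.toFinset with hT
  rw [finsum_eq_sum_of_support_subset f (s := T) (by intro x hx; simp [hT, hx]),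
      finsum_eq_sum_of_support_subset g (s := T) (by intro x hx; simp [hT, hx])]
  exact Finset.sum_le_sum fun i _ => h i

theorem SH_finsum_sub {ι : Type} {f g : ι → ℝ} (hf : (Function.support f).Finite)
    (hg : (Function.support g).Finite) : ∑ᶠ i, (f i - g i) = ∑ᶠ i, f i - ∑ᶠ i, g i := by
  classical
  set T : Finset ι := hf.toFinset ∪ hg.toFinset with hT
  have hsub : Function.support (fun i => f i - g i) ⊆ (T : Set ι) := by
    intro x hx
    simp only [Function.mem_support] at hx
    by_contra hmem
    simp only [hT, Finset.coe_union, Set.mem_union, Finset.mem_coe,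
      Set.Finite.coe_toFinset, Function.mem_support, not_or, not_not] at hmem
    exact hx (by rw [hmem.1, hmem.2, sub_zero])
  rw [finsum_eq_sum_of_support_subset f (s := T) (by intro x hx; simp [hT, hx]),
      finsum_eq_sum_of_support_subset g (s := T) (by intro x hx; simp [hT, hx]),
      finsum_eq_sum_of_support_subset _ hsub, Finset.sum_sub_distrib]

/-! ### support finiteness -/

theorem SH_finite_polyAbs (M : PlaceData K) {p : K[X]} (hp : p ≠ 0) :
    {v : M.Place | polyAbs (M.absv v) p ≠ 1}.Finite := by
  classical
  have hsub : {v : M.Place | polyAbs (M.absv v) p ≠ 1} ⊆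
      ⋃ i ∈ Finset.range (p.natDegree + 1),
        {v : M.Place | p.coeff i ≠ 0 ∧ M.absv v (p.coeff i) ≠ 1} := by
    intro v hv
    by_contra hmem
    simp only [Set.mem_iUnion, Set.mem_setOf_eq, not_exists, not_and] at hmem
    apply hv
    have hle : polyAbs (M.absv v) p ≤ 1 := by
      refine SH_polyAbs_le _ _ fun i => ?_
      rcases le_or_gt i p.natDegree with h | h
      · rcases eq_or_ne (p.coeff i) 0 with h0 | h0
        · simp [h0]
        · have := hmem i (Finset.mem_range_succ_iff.2 h) h0
          simp only [not_not] at this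
          exact le_of_eq this
      · rw [p.coeff_eq_zero_of_natDegree_lt h]; simp
    have hlc : p.coeff p.natDegree ≠ 0 := mt leadingCoeff_eq_zero.mp hp
    have hge : (1:ℝ) ≤ polyAbs (M.absv v) p := by
      have := hmem p.natDegree (Finset.self_mem_range_succ _) hlc
      simp only [not_not] at this
      rw [← this]
      exact SH_coeff_le_polyAbs _ _ _
    exact le_antisymm hle hge
  refine Set.Finite.subset (Set.Finite.biUnion (Finset.range (p.natDegree + 1)).finite_toSet
    fun i _ => ?_) hsub
  rcases eq_or_ne (p.coeff i) 0 with h0 | h0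
  · simp [h0]
  · exact Set.Finite.subset (M.finite_support _ h0) fun v hv => hv.2

theorem SH_support_pair (M : PlaceData K) {p q : K[X]} (hp : p ≠ 0) (hq : q ≠ 0) :
    (Function.support fun v : M.Place =>
      Real.log (max (polyAbs (M.absv v) p) (polyAbs (M.absv v) q))).Finite := by
  refine Set.Finite.subset ((SH_finite_polyAbs M hp).union (SH_finite_polyAbs M hq))
    fun v hv => ?_
  simp only [Function.mem_support] at hv
  by_contra hmem
  simp only [Set.mem_union, Set.mem_setOf_eq, not_or, not_not] at hmem
  exact hv (by rw [hmem.1, hmem.2, max_self, Real.log_one])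

theorem SH_support_single (M : PlaceData K) {c : K[X]} (hc : c ≠ 0) :
    (Function.support fun v : M.Place => Real.log (polyAbs (M.absv v) c)).Finite := by
  refine Set.Finite.subset (SH_finite_polyAbs M hc) fun v hv => ?_
  simp only [Function.mem_support] at hv
  by_contra hmem
  simp only [Set.mem_setOf_eq, not_not] at hmem
  exact hv (by rw [hmem, Real.log_one])

theorem SH_support_elt (M : PlaceData K) {a : K} (ha : a ≠ 0) :
    (Function.support fun v : M.Place => Real.log (M.absv v a)).Finite := by
  refine Set.Finite.subset (M.finite_support a ha) fun v hv => ?_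
  simp only [Function.mem_support] at hv
  by_contra hmem
  simp only [Set.mem_setOf_eq, not_not] at hmem
  exact hv (by rw [hmem, Real.log_one])

theorem SH_content_nonneg (M : PlaceData K) {c : K[X]} (hc : c ≠ 0) :
    0 ≤ ∑ᶠ v : M.Place, Real.log (polyAbs (M.absv v) c) := by
  have hlc : c.leadingCoeff ≠ 0 := mt leadingCoeff_eq_zero.mp hc
  have h0 := M.product_formula c.leadingCoeff hlc
  rw [← h0]
  refine SH_finsum_mono (SH_support_elt M hlc) (SH_support_single M hc) fun v => ?_
  refine Real.log_le_log ((M.absv v).pos hlc) ?_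
  exact SH_coeff_le_polyAbs (M.absv v) c c.natDegree


/-! ### Homogenized substitution -/

/-- The homogenization `q^m·h(p/q)` where `p, q` are the numerator and denominator of `ψ`. -/
def SHhom (ψ : RatFunc K) (h : K[X]) (m : ℕ) : K[X] :=
  ∑ i ∈ Finset.range (m + 1), C (h.coeff i) * ψ.num ^ i * ψ.denom ^ (m - i)

theorem SH_bridge_aux (x : RatFunc K) (p q : K[X]) (hq : q ≠ 0)
    (hx : algebraMap K[X] (RatFunc K) p / algebraMap K[X] (RatFunc K) q = x)
    (h : K[X]) (m : ℕ) (hm : h.natDegree ≤ m) :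
    algebraMap K[X] (RatFunc K) (∑ i ∈ Finset.range (m + 1), C (h.coeff i) * p ^ i * q ^ (m - i))
      = h.eval₂ (algebraMap K (RatFunc K)) x * (algebraMap K[X] (RatFunc K) q) ^ m := by
  subst hx
  set A := algebraMap K[X] (RatFunc K) with hA
  have hq' : A q ≠ 0 := RatFunc.algebraMap_ne_zero hq
  rw [Polynomial.eval₂_eq_sum_range, Finset.sum_mul, map_sum]
  rw [← Finset.sum_subset (Finset.range_subset_range.2 (by omega) :
      Finset.range (h.natDegree + 1) ⊆ Finset.range (m + 1)) ?_]
  · refine Finset.sum_congr rfl fun i hi => ?_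
    have him : i ≤ m := by rw [Finset.mem_range] at hi; omega
    rw [map_mul, map_mul, map_pow, map_pow]
    have hC : A (C (h.coeff i)) = algebraMap K (RatFunc K) (h.coeff i) := by
      rw [hA, RatFunc.algebraMap_C, RatFunc.algebraMap_eq_C]
    rw [hC, div_pow, show m = i + (m - i) by omega, pow_add]
    have hqi : (A q) ^ i ≠ 0 := pow_ne_zero _ hq'
    field_simp
    rw [Nat.add_sub_cancel_left]
  · intro i him hni
    rw [Finset.mem_range] at him hni
    have : h.coeff i = 0 := coeff_eq_zero_of_natDegree_lt (by omega)
    simp [this]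

theorem SH_bridge (ψ : RatFunc K) (h : K[X]) (m : ℕ) (hm : h.natDegree ≤ m) :
    algebraMap K[X] (RatFunc K) (SHhom ψ h m)
      = h.eval₂ (algebraMap K (RatFunc K)) ψ * (algebraMap K[X] (RatFunc K) ψ.denom) ^ m :=
  SH_bridge_aux ψ ψ.num ψ.denom ψ.denom_ne_zero ψ.num_div_denom h m hm

theorem SH_num_ne_zero {ψ : RatFunc K} (hψ : 1 ≤ degRF ψ) : ψ.num ≠ 0 := by
  intro h0
  have hz : ψ = 0 := RatFunc.num_eq_zero_iff.mp h0
  rw [hz] at hψ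
  unfold degRF at hψ
  rw [RatFunc.num_zero, RatFunc.denom_zero, natDegree_zero, natDegree_one] at hψ
  simp at hψ

theorem SH_hom_natDegree_ne_zero {ψ : RatFunc K} (hψ : 1 ≤ degRF ψ) {h : K[X]} (hh : h ≠ 0) :
    SHhom ψ h h.natDegree ≠ 0 := by
  intro heq
  set n := h.natDegree with hn
  have hlc : h.coeff n ≠ 0 := mt leadingCoeff_eq_zero.mp hh
  rcases Nat.eq_zero_or_pos n with hn0 | hn1
  · rw [hn0] at heq
    unfold SHhom at heq
    simp at heq
    rw [hn0] at hlc
    exact hlc (by simpa using heq)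
  · unfold SHhom at heq
    rw [Finset.sum_range_succ, Nat.sub_self, pow_zero, mul_one] at heq
    have hsplit : C (h.coeff n) * ψ.num ^ n =
        -∑ i ∈ Finset.range n, C (h.coeff i) * ψ.num ^ i * ψ.denom ^ (n - i) :=
      eq_neg_of_add_eq_zero_right heq
    have hdvd : ψ.denom ∣ C (h.coeff n) * ψ.num ^ n := by
      rw [hsplit, dvd_neg]
      refine Finset.dvd_sum fun i hi => ?_
      rw [Finset.mem_range] at hi
      exact Dvd.dvd.mul_left (dvd_pow_self ψ.denom (by omega)) _
    have hcop : IsCoprime ψ.denom (ψ.num ^ n) := (ψ.isCoprime_num_denom.symm).pow_right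
    have hdvd2 : ψ.denom ∣ C (h.coeff n) := hcop.dvd_of_dvd_mul_right hdvd
    have hq0 : ψ.denom.natDegree = 0 := by
      have := natDegree_le_of_dvd hdvd2 (Polynomial.C_ne_zero.mpr hlc)
      simpa [natDegree_C] using this
    have hq1 : ψ.denom = 1 := ψ.monic_denom.natDegree_eq_zero.mp hq0
    have hpn : 1 ≤ ψ.num.natDegree := by
      unfold degRF at hψ; omega
    have hcomp : h.comp ψ.num = 0 := by
      rw [Polynomial.comp, Polynomial.eval₂_eq_sum_range, Finset.sum_range_succ, ← hn]
      rw [hq1] at heq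
      simpa using heq
    have hdc := Polynomial.natDegree_comp (p := h) (q := ψ.num)
    rw [hcomp, natDegree_zero] at hdc
    exact absurd hdc.symm (Nat.mul_pos hn1 hpn).ne'

theorem SH_eval₂_ne_zero {ψ : RatFunc K} (hψ : 1 ≤ degRF ψ) {h : K[X]} (hh : h ≠ 0) :
    h.eval₂ (algebraMap K (RatFunc K)) ψ ≠ 0 := by
  have hb := SH_bridge ψ h h.natDegree le_rfl
  have hne : algebraMap K[X] (RatFunc K) (SHhom ψ h h.natDegree) ≠ 0 :=
    RatFunc.algebraMap_ne_zero (SH_hom_natDegree_ne_zero hψ hh)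
  rw [hb] at hne
  exact left_ne_zero_of_mul hne

theorem SH_hom_ne_zero {ψ : RatFunc K} (hψ : 1 ≤ degRF ψ) {h : K[X]} (hh : h ≠ 0)
    {m : ℕ} (hm : h.natDegree ≤ m) : SHhom ψ h m ≠ 0 := by
  intro h0
  have hb := SH_bridge ψ h m hm
  rw [h0, map_zero] at hb
  exact (mul_ne_zero (SH_eval₂_ne_zero hψ hh)
    (pow_ne_zero _ (RatFunc.algebraMap_ne_zero ψ.denom_ne_zero))) hb.symm

theorem SH_hom_sub (ψ : RatFunc K) (f g : K[X]) (a : K) (m : ℕ) :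
    SHhom ψ (f - C a * g) m = SHhom ψ f m - C a * SHhom ψ g m := by
  unfold SHhom
  rw [Finset.mul_sum, ← Finset.sum_sub_distrib]
  refine Finset.sum_congr rfl fun i _ => ?_
  rw [coeff_sub, coeff_C_mul, C_sub, C_mul]
  ring

theorem SH_comp_rep (φ ψ : RatFunc K) :
    RFcomp φ ψ = algebraMap K[X] (RatFunc K) (SHhom ψ φ.num (degRF φ)) /
      algebraMap K[X] (RatFunc K) (SHhom ψ φ.denom (degRF φ)) := by
  have hq : (algebraMap K[X] (RatFunc K) ψ.denom) ^ (degRF φ) ≠ 0 :=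
    pow_ne_zero _ (RatFunc.algebraMap_ne_zero ψ.denom_ne_zero)
  have h1 : φ.num.natDegree ≤ degRF φ := le_max_left _ _
  have h2 : φ.denom.natDegree ≤ degRF φ := le_max_right _ _
  rw [SH_bridge ψ φ.num _ h1, SH_bridge ψ φ.denom _ h2, mul_div_mul_right _ _ hq]
  rfl


theorem SH_comp_main (M : PlaceData K) (φ ψ : RatFunc K) (hφ : 1 ≤ degRF φ)
    (hψ : 1 ≤ degRF ψ) :
    M.htRF (RFcomp φ ψ) ≤ M.htRF φ + (degRF φ : ℝ) * M.htRF ψ ∧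
      1 ≤ degRF (RFcomp φ ψ) := by
  classical
  have hf : φ.num ≠ 0 := SH_num_ne_zero hφ
  have hg : φ.denom ≠ 0 := φ.denom_ne_zero
  have hp : ψ.num ≠ 0 := SH_num_ne_zero hψ
  have hqq : ψ.denom ≠ 0 := ψ.denom_ne_zero
  set d := degRF φ with hd
  have hdnum : φ.num.natDegree ≤ d := le_max_left _ _
  have hdden : φ.denom.natDegree ≤ d := le_max_right _ _
  set N := SHhom ψ φ.num d with hNdef
  set D := SHhom ψ φ.denom d with hDdef
  have hN : N ≠ 0 := SH_hom_ne_zero hψ hf hdnum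
  have hD : D ≠ 0 := SH_hom_ne_zero hψ hg hdden
  set r := RFcomp φ ψ with hr
  have hrep : r = algebraMap K[X] (RatFunc K) N / algebraMap K[X] (RatFunc K) D :=
    SH_comp_rep φ ψ
  have hcross : r.num * D = N * r.denom := by
    have h1 : algebraMap K[X] (RatFunc K) r.num / algebraMap K[X] (RatFunc K) r.denom
        = algebraMap K[X] (RatFunc K) N / algebraMap K[X] (RatFunc K) D := by
      rw [r.num_div_denom, hrep]
    rw [div_eq_div_iff (RatFunc.algebraMap_ne_zero r.denom_ne_zero)
      (RatFunc.algebraMap_ne_zero hD)] at h1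
    exact RatFunc.algebraMap_injective K (by rw [map_mul, map_mul]; exact h1)
  obtain ⟨c, hc⟩ : r.denom ∣ D := by
    refine (r.isCoprime_num_denom.symm).dvd_of_dvd_mul_left ⟨N, ?_⟩
    exact hcross.trans (mul_comm _ _)
  have hcN : N = r.num * c := by
    have h2 : N * r.denom = (r.num * c) * r.denom := by
      rw [← hcross, hc]; ring
    exact mul_right_cancel₀ r.denom_ne_zero h2
  have hc0 : c ≠ 0 := by rintro rfl; rw [mul_zero] at hc; exact hD hc
  have hrnum : r.num ≠ 0 := fun h0 => hN (by rw [hcN, h0, zero_mul])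
  constructor
  · -- the height inequality
    have key : ∀ v : M.Place,
        Real.log (max (polyAbs (M.absv v) r.num) (polyAbs (M.absv v) r.denom)) =
        Real.log (max (polyAbs (M.absv v) N) (polyAbs (M.absv v) D)) -
          Real.log (polyAbs (M.absv v) c) := by
      intro v
      have hna := M.nonarch v
      have hmul : max (polyAbs (M.absv v) N) (polyAbs (M.absv v) D)
          = max (polyAbs (M.absv v) r.num) (polyAbs (M.absv v) r.denom)
            * polyAbs (M.absv v) c := by
        rw [hcN, hc, SH_polyAbs_mul _ hna, SH_polyAbs_mul _ hna,
          max_mul_of_nonneg _ _ (SH_polyAbs_nonneg _ c)]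
      have h1 : (0:ℝ) < max (polyAbs (M.absv v) r.num) (polyAbs (M.absv v) r.denom) :=
        lt_of_lt_of_le (SH_polyAbs_pos _ r.denom_ne_zero) (le_max_right _ _)
      have h2 : (0:ℝ) < polyAbs (M.absv v) c := SH_polyAbs_pos _ hc0
      rw [hmul, Real.log_mul h1.ne' h2.ne', add_sub_cancel_right]
    have bnd : ∀ v : M.Place,
        Real.log (max (polyAbs (M.absv v) N) (polyAbs (M.absv v) D)) ≤
        Real.log (max (polyAbs (M.absv v) φ.num) (polyAbs (M.absv v) φ.denom)) +
          (d:ℝ) * Real.log (max (polyAbs (M.absv v) ψ.num) (polyAbs (M.absv v) ψ.denom)) := by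
      intro v
      set av := M.absv v with hav
      have hna := M.nonarch v
      set Mfg := max (polyAbs av φ.num) (polyAbs av φ.denom) with hMfgdef
      set Mpq := max (polyAbs av ψ.num) (polyAbs av ψ.denom) with hMpqdef
      have hMfg : 0 < Mfg := lt_of_lt_of_le (SH_polyAbs_pos av hg) (le_max_right _ _)
      have hMpq : 0 < Mpq := lt_of_lt_of_le (SH_polyAbs_pos av hqq) (le_max_right _ _)
      have hterm : ∀ (h : K[X]), polyAbs av h ≤ Mfg →
          polyAbs av (SHhom ψ h d) ≤ Mfg * Mpq ^ d := by
        intro h hhle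
        refine SH_polyAbs_sum_le av hna _ _
          (mul_nonneg hMfg.le (pow_nonneg hMpq.le _)) fun i hi => ?_
        rw [Finset.mem_range] at hi
        rw [SH_polyAbs_mul av hna, SH_polyAbs_mul av hna, SH_polyAbs_C,
          SH_polyAbs_pow av hna, SH_polyAbs_pow av hna]
        have e1 : av (h.coeff i) ≤ Mfg := le_trans (SH_coeff_le_polyAbs av _ i) hhle
        have e2 : polyAbs av ψ.num ^ i ≤ Mpq ^ i :=
          pow_le_pow_left₀ (SH_polyAbs_nonneg av _) (le_max_left _ _) i
        have e3 : polyAbs av ψ.denom ^ (d - i) ≤ Mpq ^ (d - i) :=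
          pow_le_pow_left₀ (SH_polyAbs_nonneg av _) (le_max_right _ _) _
        calc av (h.coeff i) * polyAbs av ψ.num ^ i * polyAbs av ψ.denom ^ (d - i)
            ≤ Mfg * Mpq ^ i * Mpq ^ (d - i) := by
              refine mul_le_mul (mul_le_mul e1 e2
                  (pow_nonneg (SH_polyAbs_nonneg av _) _) hMfg.le) e3
                (pow_nonneg (SH_polyAbs_nonneg av _) _)
                (mul_nonneg hMfg.le (pow_nonneg hMpq.le _))
          _ = Mfg * Mpq ^ d := by
              rw [mul_assoc, ← pow_add, Nat.add_sub_cancel' (by omega : i ≤ d)]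
      have hbN : polyAbs av N ≤ Mfg * Mpq ^ d := hterm φ.num (le_max_left _ _)
      have hbD : polyAbs av D ≤ Mfg * Mpq ^ d := hterm φ.denom (le_max_right _ _)
      have hmx : max (polyAbs av N) (polyAbs av D) ≤ Mfg * Mpq ^ d := max_le hbN hbD
      have hpos : (0:ℝ) < max (polyAbs av N) (polyAbs av D) :=
        lt_of_lt_of_le (SH_polyAbs_pos av hD) (le_max_right _ _)
      calc Real.log (max (polyAbs av N) (polyAbs av D))
          ≤ Real.log (Mfg * Mpq ^ d) := Real.log_le_log hpos hmx
        _ = Real.log Mfg + (d:ℝ) * Real.log Mpq := by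
            rw [Real.log_mul hMfg.ne' (by positivity), Real.log_pow]
    have hsuppND := SH_support_pair M hN hD
    have hsuppc := SH_support_single M hc0
    have hsuppfg := SH_support_pair M hf hg
    have hsupppq := SH_support_pair M hp hqq
    have hsuppdpq : (Function.support fun v : M.Place =>
        (d:ℝ) * Real.log (max (polyAbs (M.absv v) ψ.num) (polyAbs (M.absv v) ψ.denom))).Finite := by
      refine Set.Finite.subset hsupppq fun v hv => ?_
      simp only [Function.mem_support] at hv ⊢
      intro h0; exact hv (by rw [h0, mul_zero])
    have hsupprhs : (Function.support fun v : M.Place =>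
        Real.log (max (polyAbs (M.absv v) φ.num) (polyAbs (M.absv v) φ.denom)) +
        (d:ℝ) * Real.log (max (polyAbs (M.absv v) ψ.num) (polyAbs (M.absv v) ψ.denom))).Finite := by
      refine Set.Finite.subset (hsuppfg.union hsuppdpq) fun v hv => ?_
      simp only [Function.mem_support] at hv
      by_contra hmem
      simp only [Set.mem_union, Function.mem_support, not_or, not_not] at hmem
      exact hv (by rw [hmem.1, hmem.2, add_zero])
    show (∑ᶠ v : M.Place,
        Real.log (max (polyAbs (M.absv v) r.num) (polyAbs (M.absv v) r.denom))) ≤ _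
    calc (∑ᶠ v : M.Place,
          Real.log (max (polyAbs (M.absv v) r.num) (polyAbs (M.absv v) r.denom)))
        = ∑ᶠ v : M.Place,
            (Real.log (max (polyAbs (M.absv v) N) (polyAbs (M.absv v) D)) -
              Real.log (polyAbs (M.absv v) c)) := finsum_congr key
      _ = (∑ᶠ v : M.Place, Real.log (max (polyAbs (M.absv v) N) (polyAbs (M.absv v) D))) -
            ∑ᶠ v : M.Place, Real.log (polyAbs (M.absv v) c) :=
          SH_finsum_sub hsuppND hsuppc
      _ ≤ ∑ᶠ v : M.Place, Real.log (max (polyAbs (M.absv v) N) (polyAbs (M.absv v) D)) := by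
          linarith [SH_content_nonneg M hc0]
      _ ≤ ∑ᶠ v : M.Place,
            (Real.log (max (polyAbs (M.absv v) φ.num) (polyAbs (M.absv v) φ.denom)) +
              (d:ℝ) * Real.log (max (polyAbs (M.absv v) ψ.num) (polyAbs (M.absv v) ψ.denom))) :=
          SH_finsum_mono hsuppND hsupprhs bnd
      _ = (∑ᶠ v : M.Place,
            Real.log (max (polyAbs (M.absv v) φ.num) (polyAbs (M.absv v) φ.denom))) +
          ∑ᶠ v : M.Place,
            (d:ℝ) * Real.log (max (polyAbs (M.absv v) ψ.num) (polyAbs (M.absv v) ψ.denom)) :=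
          finsum_add_distrib hsuppfg hsuppdpq
      _ = M.htRF φ + (d:ℝ) * M.htRF ψ := by
          rw [← mul_finsum _ _]; rfl
  · -- nonconstancy
    by_contra hcon
    have hr0 : degRF r = 0 := by omega
    have hnum0 : r.num.natDegree = 0 := by
      have := le_max_left r.num.natDegree r.denom.natDegree
      unfold degRF at hr0; omega
    have hden0 : r.denom.natDegree = 0 := by
      unfold degRF at hr0; omega
    have hden1 : r.denom = 1 := r.monic_denom.natDegree_eq_zero.mp hden0
    set a := r.num.coeff 0 with ha
    have hnumC : r.num = C a := r.num.eq_C_of_natDegree_eq_zero hnum0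
    have hzero : SHhom ψ (φ.num - C a * φ.denom) d = 0 := by
      rw [SH_hom_sub, ← hNdef, ← hDdef, hcN, hc, hden1, hnumC]
      ring
    have hne : φ.num - C a * φ.denom ≠ 0 := by
      intro h0
      have hfd : φ.num = C a * φ.denom := by
        have := sub_eq_zero.mp h0; exact this
      have hu : IsUnit φ.denom := φ.isCoprime_num_denom.isUnit_of_dvd'
        ⟨C a, by rw [hfd]; ring⟩ (dvd_refl _)
      have hgd : φ.denom.natDegree = 0 := natDegree_eq_zero_of_isUnit hu
      have hfd2 : φ.num.natDegree = 0 := by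
        have h1 : φ.num.natDegree ≤ φ.denom.natDegree := by
          rw [hfd]; exact le_trans (natDegree_C_mul_le a φ.denom) le_rfl
        omega
      have hD0 : degRF φ = max φ.num.natDegree φ.denom.natDegree := rfl
      omega
    have hdegsub : (φ.num - C a * φ.denom).natDegree ≤ d := by
      refine le_trans (natDegree_sub_le _ _) (max_le hdnum ?_)
      exact le_trans (natDegree_C_mul_le a φ.denom) hdden
    exact SH_hom_ne_zero hψ hne hdegsub hzero


theorem SH_degRF_X : degRF (RatFunc.X : RatFunc K) = 1 := by
  unfold degRF
  rw [RatFunc.num_X, RatFunc.denom_X, natDegree_X, natDegree_one]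
  rfl

theorem SH_htRF_X (M : PlaceData K) : M.htRF (RatFunc.X : RatFunc K) = 0 := by
  unfold PlaceData.htRF
  rw [RatFunc.num_X, RatFunc.denom_X]
  have hz : ∀ v : M.Place,
      Real.log (max (polyAbs (M.absv v) X) (polyAbs (M.absv v) 1)) = 0 := fun v => by
    rw [SH_polyAbs_X, SH_polyAbs_one, max_self, Real.log_one]
  exact finsum_eq_zero_of_forall_eq_zero hz


end StmtOneAux

/-- `h(φⁿ) ≤ ((dⁿ-1)/(d-1))·h(φ) + d²·((d^(n-1)-1)/(d-1))·log 8`. -/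
theorem stmt_1 {K : Type*} [Field K] (M : PlaceData K) (φ : RatFunc K)
    (d : ℕ) (hdeg : degRF φ = d) (hd : 2 ≤ d) :
    ∀ n : ℕ, 1 ≤ n →
      M.htRF (RFiter φ n) ≤
        (((d : ℝ) ^ n - 1) / ((d : ℝ) - 1)) * M.htRF φ +
          (d : ℝ) ^ 2 * (((d : ℝ) ^ (n - 1) - 1) / ((d : ℝ) - 1)) * Real.log 8 := by
  intro n hn
  have hφ1 : 1 ≤ degRF φ := by omega
  have hd1 : (1:ℝ) < (d:ℝ) := by exact_mod_cast hd
  have hdpos : (0:ℝ) < (d:ℝ) - 1 := by linarith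
  have main : ∀ m : ℕ, 1 ≤ degRF (RFiter φ m) ∧
      M.htRF (RFiter φ m) ≤ (((d:ℝ) ^ m - 1) / ((d:ℝ) - 1)) * M.htRF φ := by
    intro m
    induction m with
    | zero =>
      refine ⟨le_of_eq SH_degRF_X.symm, ?_⟩
      show M.htRF (RatFunc.X : RatFunc K) ≤ _
      rw [SH_htRF_X]
      simp
    | succ m ih =>
      obtain ⟨ihdeg, ihht⟩ := ih
      obtain ⟨hle, hdeg'⟩ := SH_comp_main M φ (RFiter φ m) hφ1 ihdeg
      refine ⟨hdeg', ?_⟩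
      have hstep : M.htRF (RFiter φ (m + 1)) ≤
          M.htRF φ + (d:ℝ) * M.htRF (RFiter φ m) := by
        rw [← hdeg]
        exact hle
      have hmul : (d:ℝ) * M.htRF (RFiter φ m) ≤
          (d:ℝ) * ((((d:ℝ) ^ m - 1) / ((d:ℝ) - 1)) * M.htRF φ) :=
        mul_le_mul_of_nonneg_left ihht (by positivity)
      have heq : M.htRF φ + (d:ℝ) * ((((d:ℝ) ^ m - 1) / ((d:ℝ) - 1)) * M.htRF φ) =
          (((d:ℝ) ^ (m + 1) - 1) / ((d:ℝ) - 1)) * M.htRF φ := by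
        field_simp
        ring
      linarith
  obtain ⟨_, hmain⟩ := main n
  have h8 : (0:ℝ) ≤ Real.log 8 := Real.log_nonneg (by norm_num)
  have hone : (1:ℝ) ≤ (d:ℝ) ^ (n - 1) := one_le_pow₀ (by linarith : (1:ℝ) ≤ (d:ℝ))
  have hge : (0:ℝ) ≤ (d:ℝ) ^ 2 * (((d:ℝ) ^ (n - 1) - 1) / ((d:ℝ) - 1)) * Real.log 8 := by
    refine mul_nonneg (mul_nonneg (by positivity) (div_nonneg (by linarith) hdpos.le)) h8
  linarith


end
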